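/- If a Hermitian holomorphic vector bundle (E,h) over a compact complex manifold X is mean curvature positive with respect to some Hermitian metric g on X (i.e., tr_g R^{(E,h)} is a positive definite Hermitian form on E), then (E,h) is BC-p positive for every p ≥ 1. -/
import Mathlib

/- STATEMENT 2: mean curvature positivity of a Hermitian holomorphic bundle `(E,h)` over a
compact complex manifold implies BC-p positivity for every `p ≥ 1`.

The bundle is modelled fibrewise: `T x` is the tangent space at `x` (with the Hermitian
metric `g`), `E x` the fibre, and `R x v e` the diagonal Chern-curvature value
`R(v, v̄, e, ē)`.  Mean curvature positivity w.r.t. `g` says that for the `g`-unitary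
frame `ε x` of `T x` and every `0 ≠ e ∈ E_x` one has `∑ i R(ε_i, ε̄_i, e, ē) > 0`. -/

/-- BC-p positivity of a Hermitian bundle with (diagonal) curvature `R`. -/
def BCpPos {X : Type*} {T E : X → Type*}
    [∀ x, NormedAddCommGroup (E x)] [∀ x, InnerProductSpace ℂ (E x)]
    (R : ∀ x, T x → E x → ℝ) (p : ℕ) : Prop :=
  ∀ x (e : Fin p → E x), Orthonormal ℂ e → ∃ v : T x, 0 < ∑ i, R x v (e i)

theorem stmt2 {X : Type*} [TopologicalSpace X] [CompactSpace X]
    {T E : X → Type*}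
    [∀ x, NormedAddCommGroup (E x)] [∀ x, InnerProductSpace ℂ (E x)]
    [∀ x, NormedAddCommGroup (T x)] [∀ x, InnerProductSpace ℂ (T x)]
    (R : ∀ x, T x → E x → ℝ) (n : ℕ)
    (ε : ∀ x, Fin n → T x)
    (hframe : ∀ x, Orthonormal ℂ (ε x))
    (hbasis : ∀ x, Submodule.span ℂ (Set.range (ε x)) = ⊤)
    (hmean : ∀ x (e : E x), e ≠ 0 → 0 < ∑ i, R x (ε x i) e) :
    ∀ p : ℕ, 1 ≤ p → BCpPos R p := by
  intro p hp x e he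
  have hne : ∀ i, e i ≠ 0 := fun i => he.ne_zero i
  have : Nonempty (Fin p) := ⟨⟨0, hp⟩⟩
  have h1 : 0 < ∑ i, ∑ j, R x (ε x j) (e i) :=
    Finset.sum_pos (fun i _ => hmean x (e i) (hne i)) Finset.univ_nonempty
  rw [Finset.sum_comm] at h1
  by_contra h
  push_neg at h
  exact absurd h1 (not_lt.2 (Finset.sum_nonpos fun j _ => h (ε x j)))
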